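/- Let A be a square singular matrix over a field F and A⁻ any von Neumann inverse of A. Then A^D = ((A²A⁻ + I − AA⁻)^D)² · A. -/
import Mathlib


open Matrix Polynomial

section DrazinAux
variable {R : Type*} [Ring R]

lemma drazin_aux_pow {X M : R} (h1 : M * X = X * M) (h2 : X * M * X = X) :
    ∀ m : ℕ, X ^ (m + 1) * M ^ m = X := by
  intro m
  induction m with
  | zero => simp
  | succ m ih =>
    calc X ^ (m + 2) * M ^ (m + 1)
        = (X * X ^ (m + 1)) * (M ^ m * M) := by rw [pow_succ' X (m+1), pow_succ M m]
      _ = X * ((X ^ (m + 1) * M ^ m) * M) := by simp only [mul_assoc]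
      _ = X * (X * M) := by rw [ih]
      _ = X * (M * X) := by rw [h1]
      _ = X := by rw [← mul_assoc, h2]

lemma drazin_aux_absorb {X M : R} {a : ℕ} (h3 : M ^ (a + 1) * X = M ^ a) :
    ∀ m : ℕ, M ^ (a + m) * X ^ m = M ^ a := by
  intro m
  induction m with
  | zero => simp
  | succ m ih =>
    calc M ^ (a + (m + 1)) * X ^ (m + 1)
        = (M ^ m * M ^ (a + 1)) * (X * X ^ m) := by
          rw [show a + (m + 1) = m + (a + 1) from by omega, pow_add, pow_succ' X m]
      _ = M ^ m * ((M ^ (a + 1) * X) * X ^ m) := by simp only [mul_assoc]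
      _ = M ^ m * (M ^ a * X ^ m) := by rw [h3]
      _ = M ^ (a + m) * X ^ m := by rw [show a + m = m + a from by omega, pow_add, mul_assoc]
      _ = M ^ a := ih

lemma drazin_aux_upgrade {X M : R} {a b : ℕ} (hab : a ≤ b)
    (h3 : M ^ (a + 1) * X = M ^ a) : M ^ (b + 1) * X = M ^ b := by
  obtain ⟨c, rfl⟩ := Nat.exists_eq_add_of_le hab
  calc M ^ (a + c + 1) * X = M ^ c * (M ^ (a + 1) * X) := by
        rw [show a + c + 1 = c + (a + 1) from by omega, pow_add, mul_assoc]
    _ = M ^ c * M ^ a := by rw [h3]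
    _ = M ^ (a + c) := by rw [← pow_add, Nat.add_comm]

/-- Uniqueness of Drazin-type inverses. -/
lemma drazin_unique {M X Y : R} {a b : ℕ}
    (hX1 : M ^ (a + 1) * X = M ^ a) (hX2 : X * M * X = X) (hX3 : M * X = X * M)
    (hY1 : M ^ (b + 1) * Y = M ^ b) (hY2 : Y * M * Y = Y) (hY3 : M * Y = Y * M) :
    X = Y := by
  set K := max a b with hK
  have hX1' : M ^ (K + 1) * X = M ^ K := drazin_aux_upgrade (le_max_left a b) hX1
  have hY1' : M ^ (K + 1) * Y = M ^ K := drazin_aux_upgrade (le_max_right a b) hY1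
  have hY1'' : M ^ (K + 1 + 1) * Y = M ^ (K + 1) :=
    drazin_aux_upgrade (by omega) hY1
  have cX : Commute M X := hX3
  have cY : Commute M Y := hY3
  have lemX : ∀ m, X ^ (m + 1) * M ^ m = X := drazin_aux_pow hX3 hX2
  have lemY : ∀ m, Y ^ (m + 1) * M ^ m = Y := drazin_aux_pow hY3 hY2
  have absY : ∀ m, M ^ (K + 1 + m) * Y ^ m = M ^ (K + 1) := drazin_aux_absorb hY1''
  have hmsplit : M ^ (K + 1 + (K + 2)) = (M ^ (K + 1) * M) * M ^ (K + 1) := by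
    rw [← pow_succ, ← pow_add]
    congr 1
    omega
  calc X = X ^ (K + 2) * M ^ (K + 1) := (lemX (K + 1)).symm
    _ = X ^ (K + 2) * (M ^ (K + 1 + (K + 2)) * Y ^ (K + 2)) := by rw [absY (K + 2)]
    _ = ((X ^ (K + 2) * M ^ (K + 1)) * M) * (M ^ (K + 1) * Y ^ (K + 2)) := by
        rw [hmsplit]; simp only [mul_assoc]
    _ = (X * M) * (M ^ (K + 1) * Y ^ (K + 2)) := by rw [lemX (K + 1)]
    _ = (X * M ^ (K + 2)) * Y ^ (K + 2) := by
        rw [pow_succ' M (K + 1)]; simp only [mul_assoc]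
    _ = (M ^ (K + 2) * X) * Y ^ (K + 2) := by rw [← (cX.pow_left (K + 2)).eq]
    _ = M ^ (K + 1) * Y ^ (K + 2) := by
        rw [pow_succ' M (K + 1), mul_assoc M (M ^ (K + 1)) X, hX1', ← pow_succ' M K]
    _ = (M ^ (K + 1) * Y) * Y ^ (K + 1) := by
        rw [pow_succ' Y (K + 1), ← mul_assoc]
    _ = Y ^ (K + 1) * M ^ K := by rw [hY1', ← (cY.pow_pow K (K + 1)).eq]
    _ = Y := lemY K

lemma drazin_key {p x y : R} (hpp : p * p = p) (hxp : x * p = x) (hpy : p * y = y) :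
    (x + 1 - p) * (y + 1 - p) = x * y + 1 - p := by
  have h : (x + 1 - p) * (y + 1 - p)
      = x * y + x - x * p + (y + 1 - p) - p * y - p + p * p := by noncomm_ring
  rw [h, hpp, hxp, hpy]
  abel

end DrazinAux

/-- The Drazin index of a square matrix: the smallest natural number `k`
such that `rank (A ^ k) = rank (A ^ (k+1))`. -/
noncomputable def drazinIndex {n : Type*} [Fintype n] [DecidableEq n]
    {F : Type*} [Field F] (A : Matrix n n F) : ℕ :=
  sInf {k : ℕ | (A ^ k).rank = (A ^ (k + 1)).rank}

/-- `X` is the Drazin inverse of `A`: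
`A^(k+1) * X = A^k`, `X * A * X = X`, `A * X = X * A` with `k = drazinIndex A`. -/
def IsDrazinInverse {n : Type*} [Fintype n] [DecidableEq n]
    {F : Type*} [Field F] (A X : Matrix n n F) : Prop :=
  A ^ (drazinIndex A + 1) * X = A ^ drazinIndex A ∧ X * A * X = X ∧ A * X = X * A

/-- for a singular `A` and any von Neumann inverse `A⁻`,
`A^D = ((A²A⁻ + I − AA⁻)^D)² · A`. -/
theorem drazin_from_special_sum {F : Type*} [Field F] {n : ℕ}
    (A Am : Matrix (Fin n) (Fin n) F)
    (hsing : ¬ IsUnit A) (hAm : A * Am * A = A)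
    (AD D : Matrix (Fin n) (Fin n) F)
    (hAD : IsDrazinInverse A AD)
    (hD : IsDrazinInverse (A * A * Am + 1 - A * Am) D) :
    AD = D ^ 2 * A := by
  obtain ⟨hA1, hA2, hA3⟩ := hAD
  obtain ⟨hB1, hB2, hB3⟩ := hD
  set k := drazinIndex A with hk
  set P : Matrix (Fin n) (Fin n) F := A * Am with hPdef
  set E : Matrix (Fin n) (Fin n) F := AD * P + 1 - P with hEdef
  have hBP : A * A * Am + 1 - A * Am = A * P + 1 - P := by rw [hPdef, mul_assoc]
  rw [hBP] at hB1 hB2 hB3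
  set B : Matrix (Fin n) (Fin n) F := A * P + 1 - P with hBdef
  -- basic multiplicative facts
  have hPP : P * P = P := by
    calc P * P = (A * Am * A) * Am := by rw [hPdef]; simp only [mul_assoc]
      _ = P := by rw [hAm, hPdef]
  have hPA : P * A = A := by rw [hPdef, mul_assoc]; rw [← mul_assoc]; exact hAm
  have hPAx : ∀ X : Matrix (Fin n) (Fin n) F, P * (A * X) = A * X := by
    intro X; rw [← mul_assoc, hPA]
  have hADeq : A * (AD * AD) = AD := by
    calc A * (AD * AD) = (A * AD) * AD := by rw [mul_assoc]
      _ = (AD * A) * AD := by rw [hA3]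
      _ = AD := hA2
  have hPAD : P * AD = AD := by
    calc P * AD = P * (A * (AD * AD)) := by rw [hADeq]
      _ = A * (AD * AD) := hPAx _
      _ = AD := hADeq
  have hPADP : P * (AD * P) = AD * P := by rw [← mul_assoc, hPAD]
  have hADPP : (AD * P) * P = AD * P := by rw [mul_assoc, hPP]
  -- powers of B
  have Bpow : ∀ m : ℕ, B ^ (m + 1) = A ^ (m + 1) * P + 1 - P := by
    intro m
    induction m with
    | zero => rw [pow_one, pow_one, hBdef]
    | succ m ih =>
      have hxp : (A ^ (m + 1) * P) * P = A ^ (m + 1) * P := by rw [mul_assoc, hPP]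
      have hpy : P * (A * P) = A * P := hPAx _
      calc B ^ (m + 2) = (A ^ (m + 1) * P + 1 - P) * (A * P + 1 - P) := by
            rw [pow_succ, ih, hBdef]
        _ = (A ^ (m + 1) * P) * (A * P) + 1 - P := drazin_key hPP hxp hpy
        _ = A ^ (m + 2) * P + 1 - P := by
            rw [mul_assoc, hPAx, ← mul_assoc, ← pow_succ]
  -- E is a Drazin-type inverse of B with exponent k + 1
  have hA1' : A ^ (k + 1 + 1) * AD = A ^ (k + 1) :=
    drazin_aux_upgrade (Nat.le_succ k) hA1
  have hAPP : (A * P) * P = A * P := by rw [mul_assoc, hPP]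
  have hBE : B * E = (A * AD) * P + 1 - P := by
    calc B * E = (A * P) * (AD * P) + 1 - P := drazin_key hPP hAPP hPADP
      _ = (A * AD) * P + 1 - P := by rw [mul_assoc, hPADP, ← mul_assoc]
  have hEB : E * B = (A * AD) * P + 1 - P := by
    calc E * B = (AD * P) * (A * P) + 1 - P := drazin_key hPP hADPP (hPAx _)
      _ = (AD * A) * P + 1 - P := by rw [mul_assoc, hPAx, ← mul_assoc]
      _ = (A * AD) * P + 1 - P := by rw [← hA3]
  have hE3 : B * E = E * B := by rw [hBE, hEB]
  have hE2 : E * B * E = E := by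
    have hxp : (AD * P) * P = AD * P := hADPP
    have hpy : P * ((A * AD) * P) = (A * AD) * P := by
      rw [mul_assoc A AD P]; exact hPAx (AD * P)
    have hprod : (AD * P) * ((A * AD) * P) = AD * P := by
      calc (AD * P) * ((A * AD) * P) = AD * (P * ((A * AD) * P)) := by
            rw [mul_assoc]
        _ = AD * ((A * AD) * P) := by rw [hpy]
        _ = AD * P := by rw [← mul_assoc AD (A * AD) P, ← mul_assoc AD A AD, hA2]
    calc E * B * E = E * (B * E) := by rw [mul_assoc]
      _ = (AD * P + 1 - P) * ((A * AD) * P + 1 - P) := by rw [hBE, hEdef]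
      _ = (AD * P) * ((A * AD) * P) + 1 - P := drazin_key hPP hxp hpy
      _ = AD * P + 1 - P := by rw [hprod]
      _ = E := hEdef.symm
  have hE1 : B ^ (k + 1 + 1) * E = B ^ (k + 1) := by
    have hxp : (A ^ (k + 2) * P) * P = A ^ (k + 2) * P := by rw [mul_assoc, hPP]
    calc B ^ (k + 2) * E = (A ^ (k + 2) * P + 1 - P) * (AD * P + 1 - P) := by
          rw [Bpow (k + 1), hEdef]
      _ = (A ^ (k + 2) * P) * (AD * P) + 1 - P := drazin_key hPP hxp hPADP
      _ = (A ^ (k + 2) * AD) * P + 1 - P := by rw [mul_assoc, hPADP, ← mul_assoc]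
      _ = A ^ (k + 1) * P + 1 - P := by rw [hA1']
      _ = B ^ (k + 1) := (Bpow k).symm
  -- uniqueness: D = E
  have hDE : D = E := drazin_unique hB1 hB2 hB3 hE1 hE2 hE3
  -- conclude
  have hEA : E * A = A * AD := by
    calc E * A = AD * (P * A) + A - P * A := by
          rw [hEdef, sub_mul, add_mul, one_mul, mul_assoc]
      _ = AD * A + A - A := by rw [hPA]
      _ = A * AD := by rw [← hA3]; abel
  have hEAAD : E * (A * AD) = AD := by
    calc E * (A * AD) = AD * (P * (A * AD)) + A * AD - P * (A * AD) := by
          rw [hEdef, sub_mul, add_mul, one_mul, mul_assoc]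
      _ = AD * (A * AD) + A * AD - A * AD := by rw [hPAx]
      _ = AD * (A * AD) := by abel
      _ = AD := by rw [← mul_assoc, hA2]
  rw [hDE, pow_two, mul_assoc, hEA, hEAAD]
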